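/- Special case of Lemma 4 in the plane: let E ⊆ ℂ be a closed subset such that every continuous nonvanishing function on the one-point compactification E ⊔ ∘ has a continuous logarithm. Then ℂ \ E is connected. -/

import Mathlib

open Set Topology

set_option maxHeartbeats 1000000

section PlaneLemmaAux
open Filter Metric Complex
open scoped OnePoint
set_option maxHeartbeats 1000000
open Set Topology Filter Metric Complex
open scoped OnePoint


/-- There is no continuous "logarithm of `e^{it}`" on `[0, 2π]` returning to its start. -/
lemma aux_no_loop (h : ℝ → ℂ) (hc : Continuous h)
    (he : ∀ t : ℝ, Complex.exp (h t) = Complex.exp (↑t * Complex.I))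
    (hper : h (2 * Real.pi) = h 0) : False := by
  have hint : ∀ t : ℝ, ∃ n : ℤ, h t - ↑t * Complex.I = ↑n * (2 * ↑Real.pi * Complex.I) := by
    intro t
    rw [← Complex.exp_eq_one_iff, Complex.exp_sub, he t, div_self (Complex.exp_ne_zero _)]
  set N : ℝ → ℝ := fun t => (h t - ↑t * Complex.I).im with hNdef
  have hNc : Continuous N :=
    Complex.continuous_im.comp (hc.sub (Complex.continuous_ofReal.mul continuous_const))
  have hval : ∀ t, ∃ n : ℤ, N t = 2 * Real.pi * n := by
    intro t
    obtain ⟨n, hn⟩ := hint t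
    refine ⟨n, ?_⟩
    simp only [hNdef, hn, Complex.mul_im, Complex.mul_re, Complex.I_re, Complex.I_im,
      Complex.ofReal_re, Complex.ofReal_im, Complex.intCast_re, Complex.intCast_im,
      Complex.re_ofNat, Complex.im_ofNat]
    ring
  obtain ⟨n₀, hn₀⟩ := hval 0
  have hπ : 0 < Real.pi := Real.pi_pos
  have hN2 : N (2 * Real.pi) = N 0 - 2 * Real.pi := by
    simp only [hNdef, hper, Complex.sub_im, Complex.mul_im, Complex.I_re, Complex.I_im,
      Complex.ofReal_re, Complex.ofReal_im]
    ring
  have hsub : Icc (N (2 * Real.pi)) (N 0) ⊆ N '' Icc 0 (2 * Real.pi) :=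
    intermediate_value_Icc' (by positivity) hNc.continuousOn
  have hx : 2 * Real.pi * ((n₀ : ℝ) - 1/2) ∈ Icc (N (2 * Real.pi)) (N 0) :=
    ⟨by rw [hN2, hn₀]; nlinarith, by rw [hn₀]; nlinarith⟩
  obtain ⟨t, _, hNt⟩ := hsub hx
  obtain ⟨m, hm⟩ := hval t
  rw [hm] at hNt
  have hcast : (m : ℝ) = (n₀ : ℝ) - 1/2 := by
    have h2π : (2 * Real.pi) ≠ 0 := by positivity
    field_simp at hNt
    nlinarith [hNt]
  have : (2 * m : ℤ) = 2 * n₀ - 1 := by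
    have : (2 * m : ℝ) = 2 * (n₀ : ℝ) - 1 := by linarith
    exact_mod_cast this
  omega

/-- A continuous nonvanishing function on `ℂ` admits a continuous logarithm on any closed ball
centered at the origin. -/
lemma aux_exists_log_on_ball (Ψ : ℂ → ℂ) (hΨ : Continuous Ψ) (h0 : ∀ w, Ψ w ≠ 0) (R : ℝ) :
    ∃ L : ℂ → ℂ, ContinuousOn L (Metric.closedBall 0 R) ∧
      ∀ w ∈ Metric.closedBall 0 R, Complex.exp (L w) = Ψ w := by
  rcases lt_or_ge R 0 with hR | hR
  · refine ⟨fun _ => 0, ?_, ?_⟩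
    · rw [Metric.closedBall_eq_empty.mpr hR]; exact continuousOn_empty _
    · intro w hw; rw [Metric.closedBall_eq_empty.mpr hR] at hw; exact absurd hw (notMem_empty w)
  set s : Set (ℝ × ℂ) := Icc (0:ℝ) 1 ×ˢ Metric.closedBall 0 R with hsdef
  have hs : IsCompact s := isCompact_Icc.prod (isCompact_closedBall _ _)
  set H : ℝ × ℂ → ℂ := fun p => Ψ ((p.1 : ℂ) * p.2) with hHdef
  have HC : Continuous H :=
    hΨ.comp ((Complex.continuous_ofReal.comp continuous_fst).mul continuous_snd)
  have hne : s.Nonempty := ⟨(0, 0), by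
    constructor
    · exact ⟨le_refl _, zero_le_one⟩
    · simpa using hR⟩
  obtain ⟨p₀, hp₀s, hp₀⟩ := hs.exists_isMinOn hne (continuous_norm.comp HC).continuousOn
  set δ : ℝ := ‖H p₀‖ with hδdef
  have hδ : 0 < δ := norm_pos_iff.mpr (h0 _)
  have hmin : ∀ p ∈ s, δ ≤ ‖H p‖ := fun p hp => isMinOn_iff.mp hp₀ p hp
  have hmin2 : ∀ (t : ℝ) (w : ℂ), (t, w) ∈ s → δ ≤ ‖Ψ ((t:ℂ) * w)‖ := by
    intro t w h
    have h2 := hmin _ h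
    simp only [hHdef] at h2
    exact h2
  have UC := hs.uniformContinuousOn_of_continuous HC.continuousOn
  rw [Metric.uniformContinuousOn_iff] at UC
  obtain ⟨η, hη, hUC⟩ := UC δ hδ
  have hUC2 : ∀ (t1 : ℝ) (w1 : ℂ), (t1, w1) ∈ s → ∀ (t2 : ℝ) (w2 : ℂ), (t2, w2) ∈ s →
      dist (t1, w1) (t2, w2) < η → ‖Ψ ((t1:ℂ) * w1) - Ψ ((t2:ℂ) * w2)‖ < δ := by
    intro t1 w1 h1 t2 w2 h2 hd
    have h3 := hUC _ h1 _ h2 hd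
    simp only [hHdef] at h3
    rwa [dist_eq_norm] at h3
  obtain ⟨n, hngt⟩ := exists_nat_gt (1 / η)
  have hn0 : 0 < (n : ℝ) := lt_trans (by positivity) hngt
  have hmem : ∀ m : ℕ, m ≤ n → ∀ w ∈ Metric.closedBall (0:ℂ) R, ((m / n : ℝ), w) ∈ s := by
    intro m hm w hw
    refine ⟨⟨by positivity, ?_⟩, hw⟩
    rw [div_le_one hn0]
    exact_mod_cast hm
  have key : ∀ k : ℕ, k ≤ n → ∃ L : ℂ → ℂ, ContinuousOn L (Metric.closedBall 0 R) ∧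
      ∀ w ∈ Metric.closedBall 0 R, Complex.exp (L w) = Ψ ((((k : ℝ) / n : ℝ) : ℂ) * w) := by
    intro k
    induction k with
    | zero =>
      intro _
      refine ⟨fun _ => Complex.log (Ψ 0), continuousOn_const, fun w hw => ?_⟩
      simp [Complex.exp_log (h0 0)]
    | succ k ih =>
      intro hk1
      obtain ⟨L, hLc, hL⟩ := ih (Nat.le_of_succ_le hk1)
      have hratio : ∀ w ∈ Metric.closedBall (0:ℂ) R,
          ‖Ψ ((((k+1 : ℕ) : ℝ) / n : ℝ) * w) / Ψ ((((k : ℕ) : ℝ) / n : ℝ) * w) - 1‖ < 1 := by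
        intro w hw
        have hp : ((((k+1 : ℕ) : ℝ) / n : ℝ), w) ∈ s := hmem _ hk1 w hw
        have hq : ((((k : ℕ) : ℝ) / n : ℝ), w) ∈ s := hmem _ (Nat.le_of_succ_le hk1) w hw
        have hdist : dist ((((k+1 : ℕ) : ℝ) / n : ℝ), w) ((((k : ℕ) : ℝ) / n : ℝ), w) < η := by
          rw [Prod.dist_eq]
          simp only [dist_self]
          rw [max_eq_left dist_nonneg, Real.dist_eq]
          have h : (((k+1 : ℕ) : ℝ) / n) - (((k : ℕ) : ℝ) / n) = 1 / n := by
            rw [div_sub_div_same]; push_cast; ring_nf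
          rw [h, abs_of_pos (by positivity), div_lt_iff₀ hn0]
          calc (1:ℝ) = η * (1/η) := by field_simp
          _ < η * n := by exact (mul_lt_mul_iff_right₀ hη).mpr hngt
        have hd := hUC2 _ _ hp _ _ hq hdist
        have hqn := hmin2 _ _ hq
        have hqne : Ψ ((((k : ℕ) : ℝ) / n : ℝ) * w) ≠ 0 := h0 _
        rw [div_sub_one hqne, norm_div, div_lt_one (norm_pos_iff.mpr hqne)]
        calc ‖Ψ ((((k+1 : ℕ) : ℝ) / n : ℝ) * w) - Ψ ((((k : ℕ) : ℝ) / n : ℝ) * w)‖ < δ := hd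
        _ ≤ _ := hqn
      have hslit : ∀ w ∈ Metric.closedBall (0:ℂ) R,
          Ψ ((((k+1 : ℕ) : ℝ) / n : ℝ) * w) / Ψ ((((k : ℕ) : ℝ) / n : ℝ) * w) ∈ Complex.slitPlane := by
        intro w hw
        have h2 := Complex.mem_slitPlane_of_norm_lt_one (hratio w hw)
        rwa [add_sub_cancel] at h2
      refine ⟨fun w => L w +
        Complex.log (Ψ ((((k+1 : ℕ) : ℝ) / n : ℝ) * w) / Ψ ((((k : ℕ) : ℝ) / n : ℝ) * w)), ?_, ?_⟩
      · refine hLc.add (ContinuousOn.clog ?_ hslit)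
        exact ((hΨ.comp (continuous_const.mul continuous_id)).continuousOn.div
          (hΨ.comp (continuous_const.mul continuous_id)).continuousOn (fun w _ => h0 _))
      · intro w hw
        rw [Complex.exp_add, hL w hw, Complex.exp_log (div_ne_zero (h0 _) (h0 _))]
        rw [mul_comm, div_mul_cancel₀ _ (h0 _)]
  obtain ⟨L, hLc, hL⟩ := key n (le_refl n)
  refine ⟨L, hLc, fun w hw => ?_⟩
  have := hL w hw
  rwa [div_self hn0.ne', Complex.ofReal_one, one_mul] at this

lemma aux_tendsto_ratio (a b : ℂ) :
    Filter.Tendsto (fun z : ℂ => (z - a) / (z - b)) (Filter.cocompact ℂ) (𝓝 1) := by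
  rw [← Metric.cobounded_eq_cocompact]
  have h1 : Tendsto (fun z : ℂ => z - b) (Bornology.cobounded ℂ) (Bornology.cobounded ℂ) := by
    rw [← tendsto_norm_atTop_iff_cobounded]
    refine tendsto_atTop_mono (fun z => ?_)
      (tendsto_atTop_add_const_right _ (-‖b‖) tendsto_norm_cobounded_atTop)
    have := norm_sub_norm_le z b
    linarith
  have h2 : Tendsto (fun z : ℂ => (b - a) * (z - b)⁻¹) (Bornology.cobounded ℂ) (𝓝 0) := by
    have := tendsto_const_nhds (α := ℂ) (x := b - a) |>.mul (tendsto_inv₀_cobounded.comp h1)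
    simpa using this
  have h3 : Tendsto (fun z : ℂ => 1 + (b - a) * (z - b)⁻¹) (Bornology.cobounded ℂ) (𝓝 1) := by
    have := tendsto_const_nhds (α := ℂ) (x := 1) (f := Bornology.cobounded ℂ) |>.add h2
    simpa using this
  refine h3.congr' ?_
  have hev : ∀ᶠ z : ℂ in Bornology.cobounded ℂ, ‖b‖ + 1 ≤ ‖z‖ :=
    tendsto_norm_cobounded_atTop.eventually_ge_atTop _
  filter_upwards [hev] with z hz
  have hzb : z - b ≠ 0 := by
    intro h
    rw [sub_eq_zero] at h
    rw [h] at hz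
    linarith
  field_simp
  ring

noncomputable def auxPsi (a : ℂ) : ℂ → OnePoint ℂ := fun w =>
  if w = 0 then OnePoint.infty else OnePoint.some (a + w⁻¹)

lemma auxPsi_ne (a : ℂ) (w : ℂ) : auxPsi a w ≠ OnePoint.some a := by
  unfold auxPsi
  split
  · exact fun h => OnePoint.infty_ne_coe a h
  · next hw =>
    intro h
    rw [OnePoint.some_eq_iff] at h
    have : w⁻¹ = 0 := by linear_combination h - a
    exact hw (inv_eq_zero.mp this)

lemma auxPsi_continuous (a : ℂ) : Continuous (auxPsi a) := by
  rw [continuous_iff_continuousAt]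
  intro w
  rcases eq_or_ne w 0 with rfl | hw
  · have h1 : Tendsto (fun w : ℂ => a + w⁻¹) (𝓝[≠] 0) (coclosedCompact ℂ) := by
      rw [Filter.coclosedCompact_eq_cocompact, ← Metric.cobounded_eq_cocompact,
        ← tendsto_norm_atTop_iff_cobounded]
      have h2 : Tendsto (fun w : ℂ => ‖w⁻¹‖ - ‖a‖) (𝓝[≠] (0:ℂ)) atTop :=
        tendsto_atTop_add_const_right _ (-‖a‖)
          (tendsto_norm_atTop_iff_cobounded.mpr tendsto_inv₀_nhdsNE_zero)
      refine tendsto_atTop_mono (fun z => ?_) h2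
      have h3 : ‖z⁻¹‖ = ‖(a + z⁻¹) - a‖ := by ring_nf
      have h4 := norm_sub_le (a + z⁻¹) a
      rw [← h3] at h4
      linarith
    have h4 : Tendsto (auxPsi a) (𝓝[≠] 0) (𝓝 ∞) := by
      refine (OnePoint.tendsto_coe_infty.comp h1).congr' ?_
      filter_upwards [self_mem_nhdsWithin] with z (hz : z ≠ 0)
      simp [auxPsi, hz]
    have h5 : ContinuousAt (auxPsi a) 0 := by
      unfold ContinuousAt
      have h0 : auxPsi a 0 = ∞ := by simp [auxPsi]
      rw [h0, ← nhdsNE_sup_pure, tendsto_sup]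
      refine ⟨h4, ?_⟩
      rw [tendsto_pure_left]
      intro U hU
      rw [h0] at *
      exact mem_of_mem_nhds (by rwa [← h0] at hU)
    exact h5
  · have heq : auxPsi a =ᶠ[𝓝 w] fun z => OnePoint.some (a + z⁻¹) := by
      filter_upwards [compl_singleton_mem_nhds hw] with z (hz : z ≠ 0)
      simp [auxPsi, hz]
    rw [continuousAt_congr heq]
    exact (OnePoint.continuous_coe.continuousAt).comp
      (continuousAt_const.add (continuousAt_inv₀ hw))

noncomputable def auxMob (a b : ℂ) : OnePoint ℂ → ℂ := fun x =>
  OnePoint.rec 1 (fun z => (z - b) / (z - a)) x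

@[simp] lemma auxMob_infty (a b : ℂ) : auxMob a b ∞ = 1 := rfl
@[simp] lemma auxMob_some (a b z : ℂ) : auxMob a b (OnePoint.some z) = (z - b) / (z - a) := rfl

lemma auxMob_continuousAt (a b : ℂ) (x : OnePoint ℂ) (hx : x ≠ OnePoint.some a) :
    ContinuousAt (auxMob a b) x := by
  induction x using OnePoint.rec with
  | infty =>
    rw [OnePoint.continuousAt_infty']
    have h1 : auxMob a b ∞ = 1 := rfl
    rw [h1, Filter.coclosedCompact_eq_cocompact]
    exact aux_tendsto_ratio b a
  | coe z =>
    rw [OnePoint.continuousAt_coe]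
    have hz : z ≠ a := fun h => hx (by rw [h])
    have : (auxMob a b ∘ OnePoint.some) = fun z : ℂ => (z - b) / (z - a) := rfl
    rw [this]
    exact ContinuousAt.div ((continuous_id.sub continuous_const).continuousAt)
      ((continuous_id.sub continuous_const).continuousAt) (sub_ne_zero.mpr hz)

lemma aux_alg (w1 zz aa bb : ℂ) (h1 : w1 ≠ 0) (h2 : zz - aa ≠ 0) (h3 : zz - bb ≠ 0)
    (h4 : aa - bb ≠ 0) :
    w1 / (w1 * ((zz - bb) / (zz - aa))) * ((zz - bb) / (aa - bb)) * (aa - bb) = zz - aa := by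
  field_simp


/-- Plane case of Lemma 4: if `E ⊆ ℂ` is closed and every continuous zero-free function
on the one-point compactification `E ⊔ ∘` has a continuous logarithm
(`H^1(E ⊔ ∘, ℤ) = 0`), then `ℂ \ E` is connected. -/
theorem plane_complement_connected_of_onePoint_simplyCoconnected
    (E : Set ℂ) (hE : IsClosed E)
    (hlog : ∀ f : C(OnePoint E, ℂ), (∀ x, f x ≠ 0) →
      ∃ g : C(OnePoint E, ℂ), ∀ x, Complex.exp (g x) = f x) :
    IsPreconnected Eᶜ := by
  classical
  by_contra hnc
  unfold IsPreconnected at hnc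
  push_neg at hnc
  obtain ⟨u, v, hu, hv, hcover, ⟨a, ha⟩, ⟨b, hb⟩, hdisj⟩ := hnc
  set A : Set ℂ := Eᶜ ∩ u with hAdef
  set B : Set ℂ := Eᶜ ∩ v with hBdef
  have hA : IsOpen A := hE.isOpen_compl.inter hu
  have hB : IsOpen B := hE.isOpen_compl.inter hv
  have haA : a ∈ A := ha
  have hbB : b ∈ B := hb
  have hABdisj : ∀ z, z ∈ A → z ∈ B → False := by
    intro z hzA hzB
    have hz : z ∈ Eᶜ ∩ (u ∩ v) := ⟨hzA.1, hzA.2, hzB.2⟩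
    rw [hdisj] at hz
    exact hz
  have hcompl : ∀ z, z ∉ E → z ∈ A ∨ z ∈ B := by
    intro z hz
    rcases hcover hz with h | h
    · exact Or.inl ⟨hz, h⟩
    · exact Or.inr ⟨hz, h⟩
  have haE : a ∉ E := ha.1
  have hbE : b ∉ E := hb.1
  obtain ⟨ε, hε, hball⟩ := Metric.isOpen_iff.mp hA a haA
  set r : ℝ := ε / 2 with hrdef
  have hr : 0 < r := by positivity
  have hrA : Metric.closedBall a r ⊆ A := by
    refine (Metric.closedBall_subset_ball ?_).trans hball
    rw [hrdef]; linarith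
  have hbr : r < dist b a := by
    by_contra hle
    push_neg at hle
    exact hABdisj b (hrA (Metric.mem_closedBall.mpr hle)) hbB
  -- the function f on OnePoint E
  have hfc : Continuous (fun z : E => ((z : ℂ) - a) / ((z : ℂ) - b)) := by
    refine Continuous.div (continuous_subtype_val.sub continuous_const)
      (continuous_subtype_val.sub continuous_const) ?_
    intro z
    exact sub_ne_zero.mpr (fun h => hbE (h ▸ z.2))
  have hftend : Tendsto (fun z : E => ((z : ℂ) - a) / ((z : ℂ) - b))
      (coclosedCompact E) (𝓝 1) := by
    rw [Filter.coclosedCompact_eq_cocompact]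
    exact (aux_tendsto_ratio a b).comp hE.isClosedEmbedding_subtypeVal.tendsto_cocompact
  set f : C(OnePoint E, ℂ) := OnePoint.continuousMapMk ⟨_, hfc⟩ 1 hftend with hfdef
  have hf_infty : f ∞ = 1 := rfl
  have hf_coe : ∀ z : E, f (OnePoint.some z) = ((z : ℂ) - a) / ((z : ℂ) - b) := fun z => rfl
  have hf0 : ∀ x, f x ≠ 0 := by
    intro x
    induction x using OnePoint.rec with
    | infty => rw [hf_infty]; exact one_ne_zero
    | coe z =>
      rw [hf_coe]
      exact div_ne_zero (sub_ne_zero.mpr fun h => haE (h ▸ z.2))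
        (sub_ne_zero.mpr fun h => hbE (h ▸ z.2))
  obtain ⟨g, hg⟩ := hlog f hf0
  -- embedding into OnePoint ℂ
  set j : OnePoint E → OnePoint ℂ := OnePoint.map Subtype.val with hjdef
  have hjc : Continuous j := by
    refine OnePoint.continuous_map continuous_subtype_val ?_
    rw [Filter.coclosedCompact_eq_cocompact, Filter.coclosedCompact_eq_cocompact]
    exact hE.isClosedEmbedding_subtypeVal.tendsto_cocompact
  have hjinj : Function.Injective j := Option.map_injective Subtype.val_injective
  have hj : IsClosedEmbedding j := hjc.isClosedEmbedding hjinj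
  obtain ⟨G, hG⟩ := ContinuousMap.exists_extension' hj g
  have hGj : ∀ y : OnePoint E, G (j y) = g y := fun y => congrFun hG y
  have hGE : ∀ z : ℂ, ∀ hz : z ∈ E,
      Complex.exp (G (OnePoint.some z)) = (z - a) / (z - b) := by
    intro z hz
    have h1 : j (OnePoint.some (⟨z, hz⟩ : E)) = OnePoint.some z := rfl
    have h2 := hGj (OnePoint.some (⟨z, hz⟩ : E))
    rw [h1] at h2
    rw [h2, hg, hf_coe]
  have hGinf : Complex.exp (G ∞) = 1 := by
    have h1 : j ∞ = ∞ := rfl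
    have h2 := hGj ∞
    rw [h1] at h2
    rw [h2, hg, hf_infty]
  -- sets
  set A' : Set (OnePoint ℂ) := OnePoint.some '' A with hA'def
  set C : Set (OnePoint ℂ) := closure A' with hCdef
  have hA'open : IsOpen A' := OnePoint.isOpen_image_coe.mpr hA
  have hsubC : A' ⊆ C := by rw [hCdef]; exact subset_closure
  have hBC : ∀ z ∈ B, OnePoint.some z ∉ C := by
    intro z hz hmem
    have hB'open : IsOpen (OnePoint.some '' B) := OnePoint.isOpen_image_coe.mpr hB
    obtain ⟨y, hyB, hyA⟩ := mem_closure_iff.mp hmem _ hB'open ⟨z, hz, rfl⟩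
    obtain ⟨w1, hw1, hw1e⟩ := hyA
    obtain ⟨w2, hw2, hw2e⟩ := hyB
    rw [← hw2e] at hw1e
    have hww : w1 = w2 := OnePoint.coe_injective hw1e
    exact hABdisj w2 (hww ▸ hw1) hw2
  have hCsub : C ⊆ A' ∪ Set.range j := by
    intro x hx
    by_contra hmem
    obtain ⟨hxA, hxj⟩ := (not_or.mp hmem)
    induction x using OnePoint.rec with
    | infty => exact hxj ⟨∞, rfl⟩
    | coe z =>
      have hzE : z ∉ E := fun hz => hxj ⟨OnePoint.some ⟨z, hz⟩, rfl⟩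
      have hzA : z ∉ A := fun hz => hxA ⟨z, hz, rfl⟩
      rcases hcompl z hzE with h | h
      · exact hzA h
      · exact hBC z h hx
  -- Φ
  set φ₁ : OnePoint ℂ → ℂ := fun x => Complex.exp (G x) * auxMob a b x with hφ₁def
  set Φ : OnePoint ℂ → ℂ := fun x => if x ∈ C then φ₁ x else 1 with hΦdef
  have hΦK : ∀ y : OnePoint E, φ₁ (j y) = 1 := by
    intro y
    induction y using OnePoint.rec with
    | infty =>
      show Complex.exp (G (j ∞)) * auxMob a b (j ∞) = 1
      have h1 : j ∞ = ∞ := rfl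
      rw [h1, hGinf, auxMob_infty, one_mul]
    | coe z =>
      show Complex.exp (G (j (OnePoint.some z))) * auxMob a b (j (OnePoint.some z)) = 1
      have h1 : j (OnePoint.some z) = OnePoint.some (z : ℂ) := rfl
      rw [h1, hGE (z : ℂ) z.2, auxMob_some]
      have hza : (z : ℂ) - a ≠ 0 := sub_ne_zero.mpr fun h => haE (h ▸ z.2)
      have hzb : (z : ℂ) - b ≠ 0 := sub_ne_zero.mpr fun h => hbE (h ▸ z.2)
      field_simp
  have hφ₁cont : ∀ x : OnePoint ℂ, x ≠ OnePoint.some a → ContinuousAt φ₁ x := by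
    intro x hx
    exact (Complex.continuous_exp.comp G.continuous).continuousAt.mul
      (auxMob_continuousAt a b x hx)
  have hΦcont : ∀ x : OnePoint ℂ, x ≠ OnePoint.some a → ContinuousAt Φ x := by
    intro x hx
    by_cases hxC : x ∈ C
    · rcases hCsub hxC with hxA | hxj
      · have heq : Φ =ᶠ[𝓝 x] φ₁ := by
          filter_upwards [hA'open.mem_nhds hxA] with y hy
          rw [hΦdef]
          simp only []
          rw [if_pos (hsubC hy)]
        rw [continuousAt_congr heq]
        exact hφ₁cont x hx
      · obtain ⟨y, rfl⟩ := hxj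
        have hval : Φ (j y) = 1 := by
          rw [hΦdef]
          simp only []
          rw [if_pos hxC, hΦK y]
        unfold ContinuousAt
        rw [hval]
        have h1 : Tendsto φ₁ (𝓝 (j y)) (𝓝 1) := by
          have h2 := hφ₁cont _ hx
          unfold ContinuousAt at h2
          rwa [hΦK y] at h2
        intro U hU
        have h2 := h1 hU
        rw [Filter.mem_map] at h2 ⊢
        filter_upwards [h2] with p hp
        by_cases hpC : p ∈ C
        · show Φ p ∈ U
          rw [hΦdef]
          simp only []
          rw [if_pos hpC]
          exact hp
        · show Φ p ∈ U
          rw [hΦdef]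
          simp only []
          rw [if_neg hpC]
          exact mem_of_mem_nhds hU
    · have heq : Φ =ᶠ[𝓝 x] fun _ => 1 := by
        filter_upwards [(isClosed_closure (s := A')).isOpen_compl.mem_nhds hxC] with y hy
        rw [hΦdef]
        simp only []
        rw [if_neg hy]
      rw [continuousAt_congr heq]
      exact continuousAt_const
  -- Ψ
  set Ψ : ℂ → ℂ := fun w => Φ (auxPsi a w) with hΨdef
  have hΨcont : Continuous Ψ := by
    rw [continuous_iff_continuousAt]
    intro w
    exact (hΦcont _ (auxPsi_ne a w)).comp (auxPsi_continuous a).continuousAt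
  have hΦne : ∀ x : OnePoint ℂ, x ≠ OnePoint.some a → Φ x ≠ 0 := by
    intro x hx
    rw [hΦdef]
    simp only []
    split
    · next hxC =>
      refine mul_ne_zero (Complex.exp_ne_zero _) ?_
      induction x using OnePoint.rec with
      | infty => rw [auxMob_infty]; exact one_ne_zero
      | coe z =>
        rw [auxMob_some]
        have hza : z ≠ a := fun h => hx (by rw [h])
        have hzb : z ≠ b := by
          intro h
          exact hBC b hbB (h ▸ hxC)
        exact div_ne_zero (sub_ne_zero.mpr hzb) (sub_ne_zero.mpr hza)
    · exact one_ne_zero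
  have hΨ0 : ∀ w, Ψ w ≠ 0 := fun w => hΦne _ (auxPsi_ne a w)
  obtain ⟨L, hLc, hL⟩ := aux_exists_log_on_ball Ψ hΨcont hΨ0 (r⁻¹ + 1)
  -- the circle
  set zc : ℝ → ℂ := fun t => a + r * Complex.exp (↑t * Complex.I) with hzcdef
  set wc : ℝ → ℂ := fun t => (zc t - a)⁻¹ with hwcdef
  have hzsub : ∀ t, zc t - a = (r : ℂ) * Complex.exp (↑t * Complex.I) := by
    intro t
    rw [hzcdef]
    ring
  have hzne : ∀ t, zc t - a ≠ 0 := by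
    intro t
    rw [hzsub]
    exact mul_ne_zero (Complex.ofReal_ne_zero.mpr hr.ne') (Complex.exp_ne_zero _)
  have hznorm : ∀ t, ‖zc t - a‖ = r := by
    intro t
    rw [hzsub t, norm_mul, Complex.norm_real,
      Complex.norm_exp_ofReal_mul_I, mul_one, Real.norm_of_nonneg hr.le]
  have hzmem : ∀ t, zc t ∈ Metric.closedBall a r := by
    intro t
    rw [Metric.mem_closedBall, dist_eq_norm, hznorm]
  have hwmem : ∀ t, wc t ∈ Metric.ball (0:ℂ) (r⁻¹ + 1) := by
    intro t
    rw [Metric.mem_ball, dist_zero_right, hwcdef]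
    simp only [norm_inv]
    rw [hznorm]
    linarith
  have hpsiw : ∀ t, auxPsi a (wc t) = OnePoint.some (zc t) := by
    intro t
    have hwne : wc t ≠ 0 := inv_ne_zero (hzne t)
    unfold auxPsi
    rw [if_neg hwne, hwcdef]
    simp only [inv_inv]
    exact congrArg _ (by ring)
  have hΨw : ∀ t, Ψ (wc t) =
      Complex.exp (G (OnePoint.some (zc t))) * ((zc t - b) / (zc t - a)) := by
    intro t
    rw [hΨdef]
    simp only []
    rw [hpsiw t]
    have hmemC : OnePoint.some (zc t) ∈ C := hsubC ⟨zc t, hrA (hzmem t), rfl⟩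
    rw [hΦdef]
    simp only []
    rw [if_pos hmemC, hφ₁def]
    simp only [auxMob_some]
  have habne : a - b ≠ 0 := sub_ne_zero.mpr fun h => hABdisj a haA (h ▸ hbB)
  have hzbne : ∀ t, zc t - b ≠ 0 :=
    fun t => sub_ne_zero.mpr fun h => hABdisj (zc t) (hrA (hzmem t)) (h ▸ hbB)
  have habnorm : r < ‖a - b‖ := by
    rw [norm_sub_rev, ← dist_eq_norm]
    exact hbr
  have hslit : ∀ t, (zc t - b) / (a - b) ∈ Complex.slitPlane := by
    intro t
    have heq : (zc t - b) / (a - b) = 1 + (zc t - a) / (a - b) := by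
      rw [one_add_div habne]
      congr 1
      ring
    rw [heq]
    refine Complex.mem_slitPlane_of_norm_lt_one ?_
    rw [norm_div, hznorm, div_lt_one (norm_pos_iff.mpr habne)]
    exact habnorm
  set θ : ℝ → ℂ := fun t => G (OnePoint.some (zc t)) - L (wc t) +
    Complex.log ((zc t - b) / (a - b)) + Complex.log (a - b) with hθdef
  have hexpθ : ∀ t, Complex.exp (θ t) = (r : ℂ) * Complex.exp (↑t * Complex.I) := by
    intro t
    rw [hθdef]
    simp only []
    rw [Complex.exp_add, Complex.exp_add, Complex.exp_sub,
      hL (wc t) (Metric.ball_subset_closedBall (hwmem t)), hΨw t,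
      Complex.exp_log (div_ne_zero (hzbne t) habne), Complex.exp_log habne, ← hzsub t]
    exact aux_alg _ _ _ _ (Complex.exp_ne_zero _) (hzne t) (hzbne t) habne
  have hθc : Continuous θ := by
    have hzc : Continuous zc := by
      rw [hzcdef]
      exact continuous_const.add (continuous_const.mul
        (Complex.continuous_exp.comp (Complex.continuous_ofReal.mul continuous_const)))
    have hwcc : Continuous wc := by
      rw [hwcdef]
      exact (hzc.sub continuous_const).inv₀ hzne
    have hLwc : Continuous fun t => L (wc t) := by
      rw [continuous_iff_continuousAt]
      intro t
      refine (hLc.continuousAt ?_).comp hwcc.continuousAt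
      exact Filter.mem_of_superset (Metric.isOpen_ball.mem_nhds (hwmem t))
        Metric.ball_subset_closedBall
    refine (((G.continuous.comp (OnePoint.continuous_coe.comp hzc)).sub hLwc).add ?_).add
      continuous_const
    exact Continuous.clog ((hzc.sub continuous_const).div_const _) hslit
  have hper : θ (2 * Real.pi) = θ 0 := by
    have hz20 : zc (2 * Real.pi) = zc 0 := by
      rw [hzcdef]
      simp only []
      have h1 : ((2 * Real.pi : ℝ) : ℂ) * Complex.I = 2 * ↑Real.pi * Complex.I := by
        push_cast
        ring
      rw [h1, Complex.exp_two_pi_mul_I]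
      norm_num
    simp only [hθdef, hwcdef, hz20]
  refine aux_no_loop (fun t => θ t - (Real.log r : ℂ)) (hθc.sub continuous_const) ?_
    (by simp only [hper])
  intro t
  rw [Complex.exp_sub, hexpθ t, ← Complex.ofReal_exp, Real.exp_log hr]
  exact mul_div_cancel_left₀ _ (Complex.ofReal_ne_zero.mpr hr.ne')

end PlaneLemmaAux
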